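/- The eigenvalues of the adjacency matrix of a shift k-lift H of a graph G are exactly the multiset union over all k-th roots of unity ω of the eigenvalues of the Hermitian matrices A_s(ω). -/

import Mathlib

open Matrix Polynomial

private lemma my_charmatrix_blockDiagonal {o m R : Type*} [CommRing R] [DecidableEq o]
    [DecidableEq m] [Fintype o] [Fintype m] (M : o → Matrix m m R) :
    charmatrix (blockDiagonal M) = blockDiagonal (fun i => charmatrix (M i)) := by
  ext ⟨i, a⟩ ⟨j, b⟩
  by_cases hab : a = b
  · subst hab
    by_cases hij : i = j
    · subst hij; simp [blockDiagonal_apply]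
    · rw [charmatrix_apply_ne _ _ _ (by simp [hij])]
      simp [blockDiagonal_apply, charmatrix_apply_ne _ _ _ hij]
  · rw [charmatrix_apply_ne _ _ _ (by simp [Prod.ext_iff, hab])]
    simp [blockDiagonal_apply, hab]

private lemma my_charpoly_blockDiagonal {o m R : Type*} [CommRing R] [DecidableEq o]
    [DecidableEq m] [Fintype o] [Fintype m] (M : o → Matrix m m R) :
    (blockDiagonal M).charpoly = ∏ i, (M i).charpoly := by
  rw [Matrix.charpoly, my_charmatrix_blockDiagonal, det_blockDiagonal]
  rfl

private lemma my_charpoly_conj {m R : Type*} [CommRing R] [DecidableEq m] [Fintype m]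
    (U M : Matrix m m R) [Invertible U] : (U * M * ⅟U).charpoly = M.charpoly := by
  have h1 : (U.map C) * ((⅟U).map C) = 1 := by
    rw [← Matrix.map_mul, mul_invOf_self, Matrix.map_one _ (map_zero C) (map_one C)]
  have h : charmatrix (U * M * ⅟U) = U.map C * charmatrix M * (⅟U).map C := by
    rw [charmatrix, charmatrix, mul_sub, sub_mul]
    congr 1
    · rw [mul_assoc, scalar_commute (X : R[X]) (Commute.all X) ((⅟U).map C), ← mul_assoc, h1,
        one_mul]
    · simp [RingHom.mapMatrix_apply, Matrix.map_mul, mul_assoc]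
  have h2 : ((⅟U).map C) * (U.map C) = 1 := by
    rw [← Matrix.map_mul, invOf_mul_self, Matrix.map_one _ (map_zero C) (map_one C)]
  rw [Matrix.charpoly, Matrix.charpoly, h, det_mul, det_mul, mul_comm, ← mul_assoc, ← det_mul, h2,
    det_one, one_mul]

/-- The eigenvalues of the adjacency matrix of a shift `k`-lift `H` of `G`
are exactly the multiset union, over all `k`-th roots of unity `ω`, of the eigenvalues of
the Hermitian matrices `A_s(ω)`; expressed as the characteristic polynomial of `A_H`
being the product of the characteristic polynomials of the `A_s(ω)`. -/
theorem shift_lift_spectrum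
    (n k : ℕ) [NeZero k] (A : Matrix (Fin n) (Fin n) ℝ)
    (Shift : Fin n → Fin n → ZMod k)
    (hA01 : ∀ i j, A i j = 0 ∨ A i j = 1)
    (hAsymm : A.IsSymm)
    (hShift : ∀ i j, Shift j i = - Shift i j)
    (Asω : ℂ → Matrix (Fin n) (Fin n) ℂ)
    (hAsω : ∀ t i j, Asω t i j = if A i j = 1 then t ^ (Shift i j).val else 0)
    (AH : Matrix (Fin n × ZMod k) (Fin n × ZMod k) ℂ)
    (hAH : ∀ (x y : Fin n) (i j : ZMod k),
      AH (x, i) (y, j) = if A x y = 1 ∧ j = i + Shift x y then 1 else 0) :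
    AH.charpoly =
      ((Polynomial.nthRoots k (1 : ℂ)).map (fun ω => (Asω ω).charpoly)).prod := by
  classical
  have hk : k ≠ 0 := NeZero.ne k
  set ζ : ℂ := Complex.exp (2 * Real.pi * Complex.I / k) with hζdef
  have hζ : IsPrimitiveRoot ζ k := Complex.isPrimitiveRoot_exp k hk
  have hzmod : ∀ a b : ℕ, a % k = b % k → ζ ^ a = ζ ^ b := by
    intro a b h
    have h1 : ∀ c : ℕ, ζ ^ c = ζ ^ (c % k) := fun c => by
      conv_lhs => rw [← Nat.div_add_mod c k]
      rw [pow_add, pow_mul, hζ.pow_eq_one, one_pow, one_mul]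
    rw [h1 a, h1 b, h]
  -- the equivalence `ZMod k ≃ Fin k`
  let e : ZMod k ≃ Fin k :=
    ⟨fun m => ⟨m.val, ZMod.val_lt m⟩, fun j => ((j : ℕ) : ZMod k),
     fun m => by simp [ZMod.natCast_val, ZMod.cast_id],
     fun j => by ext; simp [ZMod.val_natCast_of_lt j.isLt]⟩
  -- the DFT matrix
  let W : Matrix (ZMod k) (ZMod k) ℂ := fun i m => ζ ^ (i.val * m.val)
  have hWsub : W = (vandermonde fun i : Fin k => ζ ^ (i : ℕ)).submatrix e e := by
    ext i m
    simp [W, vandermonde, e, pow_mul, Matrix.submatrix_apply]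
  have hWdet : W.det ≠ 0 := by
    rw [hWsub, det_submatrix_equiv_self, det_vandermonde]
    rw [Finset.prod_ne_zero_iff]
    intro i _
    rw [Finset.prod_ne_zero_iff]
    intro j hj
    rw [Finset.mem_Ioi] at hj
    intro hzero
    have h2 := hζ.pow_inj j.isLt i.isLt (sub_eq_zero.mp hzero)
    exact absurd (Fin.ext h2 : j = i) (ne_of_gt hj)
  -- the conjugating matrix
  let U : Matrix (Fin n × ZMod k) (Fin n × ZMod k) ℂ :=
    kroneckerMap (· * ·) (1 : Matrix (Fin n) (Fin n) ℂ) W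
  have hUdet : IsUnit U.det := by
    rw [show U = kroneckerMap (· * ·) (1 : Matrix (Fin n) (Fin n) ℂ) W from rfl,
      det_kronecker]
    simp only [det_one, one_pow, one_mul]
    exact (pow_ne_zero _ hWdet).isUnit
  haveI hU : Invertible U := U.invertibleOfIsUnitDet hUdet
  -- the block diagonal matrix
  let D : Matrix (Fin n × ZMod k) (Fin n × ZMod k) ℂ :=
    blockDiagonal (fun m : ZMod k => Asω (ζ ^ (m.val)))
  -- the key intertwining identity
  have key : AH * U = U * D := by
    ext ⟨x, i⟩ ⟨y, m⟩
    rw [Matrix.mul_apply, Matrix.mul_apply, Fintype.sum_prod_type, Fintype.sum_prod_type]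
    have hL : ∀ z : Fin n, ∀ j : ZMod k,
        U (z, j) (y, m) = (if z = y then 1 else 0) * ζ ^ (j.val * m.val) := by
      intro z j
      simp only [U]; rw [kroneckerMap_apply]
      simp [W, Matrix.one_apply]
    have hLhs : (∑ z : Fin n, ∑ j : ZMod k, AH (x, i) (z, j) * U (z, j) (y, m))
        = if A x y = 1 then ζ ^ ((i + Shift x y).val * m.val) else 0 := by
      rw [Finset.sum_eq_single y]
      · rw [Finset.sum_eq_single (i + Shift x y)]
        · rw [hAH, hL]
          by_cases hxy : A x y = 1 <;> simp [hxy]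
        · intro j _ hj
          rw [hAH]
          simp [hj]
        · simp
      · intro z _ hz
        apply Finset.sum_eq_zero
        intro j _
        rw [hL]
        simp [hz]
      · simp
    have hRhs : (∑ z : Fin n, ∑ j : ZMod k, U (x, i) (z, j) * D (z, j) (y, m))
        = ζ ^ (i.val * m.val) * Asω (ζ ^ m.val) x y := by
      rw [Finset.sum_eq_single x]
      · rw [Finset.sum_eq_single m]
        · simp only [U, D]; rw [kroneckerMap_apply]
          simp [W, Matrix.one_apply, blockDiagonal_apply]
        · intro j _ hj
          simp [D, blockDiagonal_apply, hj]
        · simp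
      · intro z _ hz
        apply Finset.sum_eq_zero
        intro j _
        simp [U, kroneckerMap_apply, Matrix.one_apply, Ne.symm hz, hz]
      · simp
    rw [hLhs, hRhs, hAsω]
    by_cases hxy : A x y = 1
    · simp only [hxy, if_true]
      have hmod : (i + Shift x y).val * m.val
          ≡ i.val * m.val + m.val * (Shift x y).val [MOD k] :=
        calc (i + Shift x y).val * m.val
            = ((i.val + (Shift x y).val) % k) * m.val := by rw [ZMod.val_add]
          _ ≡ (i.val + (Shift x y).val) * m.val [MOD k] := (Nat.mod_modEq _ k).mul_right _
          _ = i.val * m.val + m.val * (Shift x y).val := by ring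
      rw [hzmod _ _ hmod, pow_add, ← pow_mul]
    · simp [hxy]
  -- conjugation
  have hAHconj : AH = U * D * ⅟U := by
    calc AH = AH * (U * ⅟U) := by rw [mul_invOf_self, mul_one]
      _ = (AH * U) * ⅟U := by rw [Matrix.mul_assoc]
      _ = U * D * ⅟U := by rw [key]
  rw [hAHconj, my_charpoly_conj, show D = blockDiagonal (fun m : ZMod k => Asω (ζ ^ (m.val)))
    from rfl, my_charpoly_blockDiagonal]
  -- identify the multiset of k-th roots of unity
  rw [hζ.nthRoots_eq (one_pow k), Multiset.map_map]
  simp only [Function.comp, mul_one]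
  have hms : ((Multiset.range k).map fun m => (Asω (ζ ^ m)).charpoly).prod
      = ∏ j ∈ Finset.range k, (Asω (ζ ^ j)).charpoly := rfl
  rw [hms, ← Fin.prod_univ_eq_prod_range (fun j => (Asω (ζ ^ j)).charpoly) k,
    ← Equiv.prod_comp e (fun j : Fin k => (Asω (ζ ^ (j : ℕ))).charpoly)]
  rfl
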